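/- For all non-negative integers m and j, the sum over all compositions \gamma of m having exactly j parts greater than 1 of (-1)^{k(\gamma)} equals (-1)^{m+j} * binom(\lfloor m/2 \rfloor, j). (For m = 0 the only composition is the empty one, with k = 0 and no parts greater than 1.) -/

import Mathlib

open Finset

namespace CompSignAux

lemma blocks_ne {n : ℕ} (γ : Composition (n + 1)) : γ.blocks ≠ [] := by
  intro h
  have := γ.blocks_sum
  rw [h] at this
  simp at this

lemma head_tail_sum {n : ℕ} (γ : Composition (n + 1)) :
    γ.blocks.head (blocks_ne γ) + γ.blocks.tail.sum = n + 1 := by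
  have hc := List.cons_head_tail (blocks_ne γ)
  have h : (γ.blocks.head (blocks_ne γ) :: γ.blocks.tail).sum = n + 1 := by
    rw [hc, γ.blocks_sum]
  rw [List.sum_cons] at h
  exact h

lemma head_pos {n : ℕ} (γ : Composition (n + 1)) : 0 < γ.blocks.head (blocks_ne γ) :=
  γ.blocks_pos (List.head_mem _)

/-- Prepend a block of size `a+1` to a composition of `n - a`. -/
def consComp {n : ℕ} (a : Fin (n + 1)) (δ : Composition (n - a)) : Composition (n + 1) where
  blocks := ((a : ℕ) + 1) :: δ.blocks
  blocks_pos := by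
    intro i hi
    rcases List.mem_cons.1 hi with h | h
    · omega
    · exact δ.blocks_pos h
  blocks_sum := by
    have ha := a.isLt
    have hs := δ.blocks_sum
    simp only [List.sum_cons, hs]
    omega

def sigmaEquiv (n : ℕ) : (Σ a : Fin (n + 1), Composition (n - a)) ≃ Composition (n + 1) where
  toFun x := consComp x.1 x.2
  invFun γ :=
    ⟨⟨γ.blocks.head (blocks_ne γ) - 1, by have := head_tail_sum γ; omega⟩,
      ⟨γ.blocks.tail, fun hi => γ.blocks_pos (List.mem_of_mem_tail hi), by
        have h1 := head_pos γ
        have h2 := head_tail_sum γ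
        show γ.blocks.tail.sum = n - (γ.blocks.head (blocks_ne γ) - 1)
        omega⟩⟩
  left_inv := by
    rintro ⟨a, δ⟩
    rfl
  right_inv := by
    intro γ
    have h1 := head_pos γ
    apply Composition.ext
    show (γ.blocks.head (blocks_ne γ) - 1 + 1) :: γ.blocks.tail = γ.blocks
    rw [Nat.sub_add_cancel h1, List.cons_head_tail]

/-- The signed sum over compositions of `m` with exactly `j` big parts. -/
def S (m j : ℕ) : ℤ :=
  ∑ γ : Composition m,
    if (γ.blocks.filter (fun x => 1 < x)).length = j then (-1 : ℤ) ^ γ.length else 0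

lemma comp0_blocks (γ : Composition 0) : γ.blocks = [] := by
  have h := γ.blocks_sum
  cases hb : γ.blocks with
  | nil => rfl
  | cons x t =>
    have hx := γ.blocks_pos (hb ▸ (List.mem_cons_self : x ∈ x :: t))
    rw [hb, List.sum_cons] at h
    omega

instance : Unique (Composition 0) where
  default := ⟨[], by simp, rfl⟩
  uniq γ := by
    apply Composition.ext
    exact comp0_blocks γ

lemma S_zero (j : ℕ) : S 0 j = if j = 0 then 1 else 0 := by
  rw [S, Fintype.sum_unique]
  simp [comp0_blocks, Composition.length, eq_comm]

lemma S_succ (n j : ℕ) :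
    S (n + 1) j =
      ∑ a : Fin (n + 1), ∑ δ : Composition (n - a),
        if ((((a : ℕ) + 1) :: δ.blocks).filter (fun x => 1 < x)).length = j then
          (-1 : ℤ) ^ (δ.length + 1) else 0 := by
  rw [S, ← Equiv.sum_comp (sigmaEquiv n)
    (fun γ => if (γ.blocks.filter (fun x => 1 < x)).length = j then (-1 : ℤ) ^ γ.length else 0)]
  rw [← Finset.univ_sigma_univ, Finset.sum_sigma]
  rfl

lemma S_rec_zero (n : ℕ) : S (n + 1) 0 = -S n 0 := by
  rw [S_succ, Fin.sum_univ_succ]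
  have h2 : ∀ a : Fin n, ∑ δ : Composition (n - ((a.succ : Fin (n+1)) : ℕ)),
      (if ((((((a.succ : Fin (n+1)) : ℕ)) + 1) :: δ.blocks).filter
          (fun x => 1 < x)).length = 0 then (-1 : ℤ) ^ (δ.length + 1) else 0) = 0 := by
    intro a
    apply Finset.sum_eq_zero
    intro δ _
    rw [if_neg]
    rw [List.filter_cons]
    simp
  rw [Finset.sum_congr rfl (fun a _ => h2 a), Finset.sum_const, smul_zero, add_zero]
  rw [S, ← Finset.sum_neg_distrib]
  apply Finset.sum_congr
  · rfl
  intro δ _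
  simp only [Fin.val_zero, Nat.sub_zero] at *
  simp only [List.filter_cons]
  norm_num [pow_succ, Composition.length]
  split <;> ring

lemma S_rec_succ (n j : ℕ) :
    S (n + 1) (j + 1) = -S n (j + 1) - ∑ a : Fin n, S (n - ((a : ℕ) + 1)) j := by
  rw [S_succ, Fin.sum_univ_succ]
  have h2 : ∀ a : Fin n, (∑ δ : Composition (n - ((a.succ : Fin (n+1)) : ℕ)),
      if ((((((a.succ : Fin (n+1)) : ℕ)) + 1) :: δ.blocks).filter
          (fun x => 1 < x)).length = j + 1 then (-1 : ℤ) ^ (δ.length + 1) else 0)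
      = -S (n - ((a : ℕ) + 1)) j := by
    intro a
    rw [S, ← Finset.sum_neg_distrib]
    apply Finset.sum_congr
    · congr 1
    intro δ _
    rw [List.filter_cons]
    have : (1 < ((a.succ : Fin (n+1)) : ℕ) + 1) := by simp
    simp only [Fin.val_succ, decide_eq_true_eq, if_pos (by omega : 1 < (a : ℕ) + 1 + 1),
      List.length_cons, Nat.add_right_cancel_iff, pow_succ]
    split <;> ring
  rw [Finset.sum_congr rfl (fun a _ => h2 a), Finset.sum_neg_distrib]
  have h1 : (∑ δ : Composition (n - ((0 : Fin (n+1)) : ℕ)),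
      if (((((0 : Fin (n+1)) : ℕ) + 1) :: δ.blocks).filter
          (fun x => 1 < x)).length = j + 1 then (-1 : ℤ) ^ (δ.length + 1) else 0)
      = -S n (j + 1) := by
    rw [S, ← Finset.sum_neg_distrib]
    apply Finset.sum_congr
    · congr 1
    intro δ _
    rw [List.filter_cons]
    norm_num [pow_succ, Composition.length]
    split <;> ring
  rw [h1]
  ring

lemma aux (r : ℕ) : ∀ n : ℕ,
    ∑ i ∈ Finset.range n, (-1 : ℤ) ^ i * ((i / 2).choose r : ℤ)
      = (-1) ^ n * (((n / 2).choose (r + 1) : ℤ) - (((n + 1) / 2).choose (r + 1) : ℤ)) := by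
  intro n
  induction n with
  | zero => simp
  | succ n ih =>
    rw [Finset.sum_range_succ, ih]
    have hp : ((n + 2) / 2).choose (r + 1) = (n / 2).choose r + (n / 2).choose (r + 1) := by
      have h2 : (n + 2) / 2 = n / 2 + 1 := by omega
      rw [h2, Nat.choose_succ_succ']
    have : (((n + 1 + 1) / 2).choose (r + 1) : ℤ)
        = ((n / 2).choose r : ℤ) + ((n / 2).choose (r + 1) : ℤ) := by
      exact_mod_cast congrArg (Nat.cast : ℕ → ℤ) hp
    rw [this, pow_succ]
    ring

lemma S_val : ∀ m j : ℕ, S m j = (-1) ^ (m + j) * ((m / 2).choose j : ℤ) := by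
  intro m
  induction m using Nat.strong_induction_on with
  | _ m ih =>
    match m with
    | 0 =>
      intro j
      rw [S_zero]
      cases j with
      | zero => simp
      | succ j => simp [Nat.choose_eq_zero_of_lt (by omega : 0 < j + 1)]
    | n + 1 =>
      intro j
      cases j with
      | zero =>
        rw [S_rec_zero, ih n (by omega)]
        simp [pow_succ]
        try ring
      | succ j =>
        rw [S_rec_succ, ih n (by omega)]
        have hsum : (∑ a : Fin n, S (n - ((a : ℕ) + 1)) j)
            = ∑ i ∈ Finset.range n, ((-1 : ℤ) ^ (n - 1 - i + j) * (((n - 1 - i) / 2).choose j : ℤ)) := by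
          rw [← Fin.sum_univ_eq_sum_range]
          apply Finset.sum_congr rfl
          intro a _
          rw [ih (n - ((a : ℕ) + 1)) (by omega)]
          have hx : n - ((a : ℕ) + 1) = n - 1 - (a : ℕ) := by omega
          rw [hx]
        have hrefl : (∑ i ∈ Finset.range n,
            ((-1 : ℤ) ^ (n - 1 - i + j) * (((n - 1 - i) / 2).choose j : ℤ)))
            = ∑ i ∈ Finset.range n, ((-1 : ℤ) ^ (i + j) * ((i / 2).choose j : ℤ)) :=
          Finset.sum_range_reflect (fun i => (-1 : ℤ) ^ (i + j) * ((i / 2).choose j : ℤ)) n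
        rw [hsum, hrefl]
        have : ∀ i, (-1 : ℤ) ^ (i + j) * ((i / 2).choose j : ℤ)
            = (-1 : ℤ) ^ j * ((-1 : ℤ) ^ i * ((i / 2).choose j : ℤ)) := by
          intro i; rw [pow_add]; ring
        rw [Finset.sum_congr rfl (fun i _ => this i), ← Finset.mul_sum, aux j n]
        have hpow : ((-1 : ℤ)) ^ (n + 1 + (j + 1)) = (-1) ^ (n + j) := by
          have : n + 1 + (j + 1) = (n + j) + 2 := by omega
          rw [this, pow_add]
          norm_num
        rw [hpow]
        have h1 : ((-1 : ℤ)) ^ (n + (j + 1)) = -((-1) ^ n * (-1) ^ j) := by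
          rw [show n + (j + 1) = (n + j) + 1 by omega, pow_succ, pow_add]
          ring
        rw [h1, pow_add]
        ring

end CompSignAux

theorem composition_sign_sum_big_parts (m j : ℕ) :
    ∑ γ ∈ Finset.univ.filter
        (fun γ : Composition m => (γ.blocks.filter (fun x => 1 < x)).length = j),
      (-1 : ℤ) ^ γ.length
    = (-1) ^ (m + j) * ((m / 2).choose j : ℤ) := by
  rw [Finset.sum_filter]
  exact CompSignAux.S_val m j
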